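/- If p is a point in Ω and (pₙ) is a sequence in Ω converging (in the Euclidean sense) to a boundary point of Ω, then d_Ω(p, pₙ) → ∞; that is, the Hilbert metric is unbounded near the boundary. -/

import Mathlib

noncomputable section
open Classical

abbrev V2 := EuclideanSpace ℝ (Fin 2)

/-- The Hilbert distance on `Ω`: for distinct `p q` with chord endpoints `x`
(beyond `p`) and `y` (beyond `q`) on the frontier of `Ω`, it is
`(1/2) * log ((‖x−q‖·‖y−p‖)/(‖x−p‖·‖y−q‖))`; otherwise `0`. -/
noncomputable def hilbertDist (Ω : Set V2) (p q : V2) : ℝ :=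
  if h : ∃ x y : V2, x ∈ frontier Ω ∧ y ∈ frontier Ω ∧
      p ∈ openSegment ℝ x q ∧ q ∈ openSegment ℝ p y then
    (1/2) * Real.log ((dist h.choose q * dist h.choose_spec.choose p) /
      (dist h.choose p * dist h.choose_spec.choose q))
  else 0

/-- A ray from a point of an open bounded set meets the frontier. -/
lemma exists_frontier_ray (Ω : Set V2) (hΩo : IsOpen Ω)
    (hΩb : Bornology.IsBounded Ω) (a v : V2) (ha : a ∈ Ω) (hv : v ≠ 0) :
    ∃ T : ℝ, 0 < T ∧ a + T • v ∈ frontier Ω := by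
  set S : Set ℝ := {t | 0 ≤ t ∧ a + t • v ∈ closure Ω} with hSdef
  have hcont : Continuous (fun t : ℝ => a + t • v) := by continuity
  have hSclosed : IsClosed S := by
    have : S = Set.Ici (0:ℝ) ∩ ((fun t : ℝ => a + t • v) ⁻¹' closure Ω) := rfl
    rw [this]
    exact isClosed_Ici.inter (isClosed_closure.preimage hcont)
  obtain ⟨R, hR⟩ := (hΩb.closure).subset_closedBall (0 : V2)
  have hv0 : (0:ℝ) < ‖v‖ := norm_pos_iff.2 hv
  have hSsub : S ⊆ Set.Icc 0 ((R + ‖a‖) / ‖v‖) := by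
    rintro t ⟨ht0, htm⟩
    refine ⟨ht0, ?_⟩
    have h1 : ‖a + t • v‖ ≤ R := by simpa using hR htm
    have h2 : t * ‖v‖ ≤ R + ‖a‖ := by
      have h3 : ‖t • v‖ ≤ ‖a + t • v‖ + ‖a‖ := by
        have := norm_sub_le (a + t • v) a
        simpa using this
      rw [norm_smul, Real.norm_eq_abs, abs_of_nonneg ht0] at h3
      linarith
    exact (le_div_iff₀ hv0).2 h2
  have hScompact : IsCompact S := isCompact_Icc.of_isClosed_subset hSclosed hSsub
  -- a small positive element of S
  have hev : ∀ᶠ t : ℝ in nhds 0, a + t • v ∈ Ω := by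
    have : (fun t : ℝ => a + t • v) ⁻¹' Ω ∈ nhds (0:ℝ) :=
      hcont.continuousAt.preimage_mem_nhds (hΩo.mem_nhds (by simpa using ha))
    exact this
  obtain ⟨δ, hδ0, hδ⟩ := Metric.eventually_nhds_iff.1 hev
  have hδS : δ/2 ∈ S := by
    refine ⟨by linarith, subset_closure (hδ ?_)⟩
    rw [Real.dist_eq, sub_zero, abs_of_nonneg (by linarith : (0:ℝ) ≤ δ/2)]
    linarith
  have hSne : S.Nonempty := ⟨δ/2, hδS⟩
  set T := sSup S with hT
  have hTS : T ∈ S := hScompact.sSup_mem hSne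
  have hTb : BddAbove S := hScompact.bddAbove
  have hTpos : 0 < T := lt_of_lt_of_le (by linarith) (le_csSup hTb hδS)
  refine ⟨T, hTpos, ?_⟩
  rw [hΩo.frontier_eq]
  refine ⟨hTS.2, ?_⟩
  intro hmem
  have : ∀ᶠ t : ℝ in nhds T, a + t • v ∈ Ω :=
    hcont.continuousAt.preimage_mem_nhds (hΩo.mem_nhds hmem)
  obtain ⟨η, hη0, hη⟩ := Metric.eventually_nhds_iff.1 this
  have : T + η/2 ∈ S := by
    refine ⟨by linarith, subset_closure (hη ?_)⟩
    rw [Real.dist_eq, add_sub_cancel_left, abs_of_nonneg (by linarith : (0:ℝ) ≤ η/2)]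
    linarith
  have := le_csSup hTb this
  linarith

/-- Points strictly beyond a frontier point (seen from an interior point) are
outside the closure. -/
lemma not_mem_closure_beyond (Ω : Set V2) (hΩo : IsOpen Ω) (hΩc : Convex ℝ Ω)
    (p b : V2) (hp : p ∈ Ω) (hb : b ∈ frontier Ω) {t : ℝ} (ht : 1 < t) :
    p + t • (b - p) ∉ closure Ω := by
  intro hw
  have ht0 : (0:ℝ) < t := by linarith
  have hseg : b ∈ openSegment ℝ p (p + t • (b - p)) := by
    refine ⟨1 - t⁻¹, t⁻¹, ?_, by positivity, by ring, ?_⟩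
    · have : t⁻¹ < 1 := inv_lt_one_of_one_lt₀ ht
      linarith
    · rw [smul_add, smul_smul, inv_mul_cancel₀ (ne_of_gt ht0)]
      module
  have hbint : b ∈ interior Ω :=
    hΩc.openSegment_interior_closure_subset_interior (by rwa [hΩo.interior_eq]) hw hseg
  rw [hΩo.interior_eq] at hbint
  exact (hΩo.frontier_eq ▸ hb).2 hbint

/-- The Hilbert metric blows up along sequences converging to a boundary point. -/
theorem hilbertDist_tendsto_atTop_of_tendsto_frontier (Ω : Set V2) (hΩo : IsOpen Ω)
    (hΩb : Bornology.IsBounded Ω) (hΩc : Convex ℝ Ω)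
    (p : V2) (hp : p ∈ Ω) (u : ℕ → V2) (hu : ∀ n, u n ∈ Ω)
    (b : V2) (hb : b ∈ frontier Ω) (hlim : Filter.Tendsto u Filter.atTop (nhds b)) :
    Filter.Tendsto (fun n => hilbertDist Ω p (u n)) Filter.atTop Filter.atTop := by
  have hbnot : b ∉ Ω := (hΩo.frontier_eq ▸ hb).2
  have hbp : b ≠ p := fun h => hbnot (h ▸ hp)
  have hr0 : (0:ℝ) < dist b p := dist_pos.2 hbp
  set r := dist b p with hr
  rw [Filter.tendsto_atTop]
  intro M
  set ε := (r/2) * Real.exp (-(2*M)) with hε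
  have hε0 : 0 < ε := by positivity
  have hE1 : ∀ᶠ n in Filter.atTop, r/2 < dist (u n) p := by
    have hd : Filter.Tendsto (fun n => dist (u n) p) Filter.atTop (nhds r) :=
      hlim.dist tendsto_const_nhds
    exact hd.eventually (eventually_gt_nhds (by linarith))
  have hbpnorm : (0:ℝ) < ‖b - p‖ := by
    rw [norm_sub_pos_iff]; exact hbp
  set g : V2 → V2 := fun q => q + ((ε/2) * ‖q - p‖⁻¹) • (q - p) with hg
  have hgb : g b = p + (1 + (ε/2) * ‖b - p‖⁻¹) • (b - p) := by
    simp only [hg]; module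
  have hkey : g b ∉ closure Ω := by
    rw [hgb]
    refine not_mem_closure_beyond Ω hΩo hΩc p b hp hb ?_
    have : 0 < (ε/2) * ‖b - p‖⁻¹ := by positivity
    linarith
  have hgc : ContinuousAt g b := by
    have h1 : ContinuousAt (fun q : V2 => ‖q - p‖⁻¹) b :=
      ((continuous_norm.comp (continuous_sub_right p)).continuousAt).inv₀ (ne_of_gt hbpnorm)
    exact continuousAt_id.add ((continuousAt_const.mul h1).smul
      ((continuous_id.sub continuous_const).continuousAt))
  have hE2 : ∀ᶠ n in Filter.atTop, g (u n) ∉ closure Ω := by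
    have : ∀ᶠ n in Filter.atTop, g (u n) ∈ (closure Ω)ᶜ :=
      (hgc.tendsto.comp hlim).eventually_mem
        (isClosed_closure.isOpen_compl.mem_nhds hkey)
    exact this
  filter_upwards [hE1, hE2] with n h1 h2
  set q := u n with hqdef
  have hq : q ∈ Ω := hu n
  have hqp : q ≠ p := by
    intro h
    rw [h, dist_self] at h1
    linarith
  have hqpnorm : (0:ℝ) < ‖q - p‖ := by rw [norm_sub_pos_iff]; exact hqp
  -- existence of chord endpoints
  obtain ⟨T1, hT1, hx1⟩ := exists_frontier_ray Ω hΩo hΩb p (p - q) hp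
    (sub_ne_zero.2 (Ne.symm hqp))
  obtain ⟨T2, hT2, hy2⟩ := exists_frontier_ray Ω hΩo hΩb q (q - p) hq
    (sub_ne_zero.2 hqp)
  have h1T1 : (0:ℝ) < 1 + T1 := by linarith
  have h1T2 : (0:ℝ) < 1 + T2 := by linarith
  have hpx : p ∈ openSegment ℝ (p + T1 • (p - q)) q := by
    refine ⟨(1+T1)⁻¹, T1/(1+T1), by positivity, by positivity, ?_, ?_⟩
    · field_simp
    · match_scalars <;> field_simp <;> ring
  have hqy : q ∈ openSegment ℝ p (q + T2 • (q - p)) := by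
    refine ⟨T2/(1+T2), (1+T2)⁻¹, by positivity, by positivity, ?_, ?_⟩
    · field_simp
      ring
    · match_scalars <;> field_simp <;> ring
  have hex : ∃ x y : V2, x ∈ frontier Ω ∧ y ∈ frontier Ω ∧
      p ∈ openSegment ℝ x q ∧ q ∈ openSegment ℝ p y :=
    ⟨p + T1 • (p - q), q + T2 • (q - p), hx1, hy2, hpx, hqy⟩
  rw [hilbertDist, dif_pos hex]
  set x0 := hex.choose with hx0def
  set y0 := hex.choose_spec.choose with hy0def
  obtain ⟨hx0f, hy0f, hpx0, hqy0⟩ := hex.choose_spec.choose_spec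
  rw [← hx0def] at hx0f hpx0
  rw [← hy0def] at hy0f hqy0
  have d1 : dist x0 p + dist p q = dist x0 q :=
    dist_add_dist_of_mem_segment (openSegment_subset_segment ℝ _ _ hpx0)
  have d2 : dist p q + dist q y0 = dist p y0 :=
    dist_add_dist_of_mem_segment (openSegment_subset_segment ℝ _ _ hqy0)
  have hx0p : x0 ≠ p := by
    intro h
    rw [h] at hpx0
    exact hqp (left_mem_openSegment_iff.1 hpx0).symm
  have hy0q : y0 ≠ q := by
    intro h
    rw [h] at hqy0
    exact hqp (right_mem_openSegment_iff.1 hqy0).symm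
  have hdx : (0:ℝ) < dist x0 p := dist_pos.2 hx0p
  have hdpq : (0:ℝ) < dist p q := by rw [dist_comm]; linarith
  have hdy : (0:ℝ) < dist y0 q := dist_pos.2 (by exact hy0q)
  -- the far endpoint is close to q
  have hclose : dist y0 q ≤ ε/2 := by
    by_contra hbig
    push_neg at hbig
    obtain ⟨a', b', ha', hb', hab', habq⟩ := hqy0
    have hb'1 : b' < 1 := by linarith
    have hy0p : y0 - q = (b'⁻¹ - 1) • (q - p) := by
      have hqmp : q - p = b' • (y0 - p) := by
        rw [← habq]; match_scalars <;> linarith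
      have hc : (b'⁻¹ - 1) * b' = 1 - b' := by
        rw [sub_mul, inv_mul_cancel₀ hb'.ne', one_mul]
      rw [show y0 - q = (y0 - p) - (q - p) by abel, hqmp, smul_smul, hc]
      module
    set s := b'⁻¹ - 1 with hs
    have hs0 : 0 < s := by
      rw [hs, sub_pos]
      exact (one_lt_inv₀ hb').2 hb'1
    have hdyq : dist y0 q = s * ‖q - p‖ := by
      rw [dist_eq_norm, hy0p, norm_smul, Real.norm_eq_abs, abs_of_pos hs0]
    set θ := (ε/2) / (s * ‖q - p‖) with hθ
    have hθ0 : 0 < θ := by positivity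
    have hθ1 : θ < 1 := by
      rw [hθ, div_lt_one (by positivity)]
      rw [hdyq] at hbig
      linarith
    have hθs : θ * s = (ε/2) * ‖q - p‖⁻¹ := by
      rw [hθ]
      field_simp
    have hgmem : g q ∈ openSegment ℝ q y0 := by
      refine ⟨1 - θ, θ, by linarith, hθ0, by ring, ?_⟩
      have hv : (1-θ) • q + θ • y0 = q + θ • (y0 - q) := by module
      rw [hv, hy0p, smul_smul, hθs]
    have : g q ∈ interior Ω :=
      hΩc.openSegment_interior_closure_subset_interior
        (by rwa [hΩo.interior_eq]) (frontier_subset_closure hy0f) hgmem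
    exact h2 (subset_closure (hΩo.interior_eq ▸ this))
  -- final estimate
  have hexp : Real.exp (2*M) = (r/2) / ε := by
    rw [hε, Real.exp_neg]
    field_simp
  have hstep1 : (r/2) / ε ≤ dist p q / dist y0 q := by
    apply div_le_div₀ (le_of_lt hdpq) _ hdy _
    · rw [dist_comm]; linarith
    · linarith
  have hstep2 : dist p q / dist y0 q ≤
      (dist x0 q * dist y0 p) / (dist x0 p * dist y0 q) := by
    rw [div_le_div_iff₀ hdy (by positivity)]
    have hA : dist x0 p ≤ dist x0 q := by linarith
    have hB : dist p q ≤ dist y0 p := by rw [dist_comm y0 p]; linarith [d2, dist_nonneg (x := q) (y := y0)]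
    calc dist p q * (dist x0 p * dist y0 q)
        = (dist x0 p * dist p q) * dist y0 q := by ring
      _ ≤ (dist x0 q * dist y0 p) * dist y0 q := by
          apply mul_le_mul_of_nonneg_right _ (le_of_lt hdy)
          exact mul_le_mul hA hB (le_of_lt hdpq) (by positivity)
  have hratio : Real.exp (2*M) ≤ (dist x0 q * dist y0 p) / (dist x0 p * dist y0 q) := by
    rw [hexp]; linarith
  have hlog : 2*M ≤ Real.log ((dist x0 q * dist y0 p) / (dist x0 p * dist y0 q)) := by
    have := Real.log_le_log (Real.exp_pos _) hratio
    rwa [Real.log_exp] at this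
  linarith
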